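/- The matrix A is diagonal: for basis indices (u₁,u₂,u₃), (v₁,v₂,v₃) ∈ (Fin 2)³, the entry A (u₁,u₂,u₃) (v₁,v₂,v₃) vanishes unless (u₁,u₂,u₃) = (v₁,v₂,v₃), and writing sᵢ = 1 − 2*(uᵢ : ℝ) ∈ {1, −1} for the spin value at site i, the diagonal entry equals exp((β/2)*(1 + s₁*s₂) + (β/2)*(1 + s₁*s₃) + ((J*β)/2)*(1 + s₂*s₃)). -/
import Mathlib


open Matrix Kronecker

noncomputable section

/-- The Pauli z-matrix. -/
def σz : Matrix (Fin 2) (Fin 2) ℂ := !![1, 0; 0, -1]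

/-- The threefold tensor product `M₂ ⊗ M₂ ⊗ M₂`, realized via Kronecker products. -/
abbrev M3 : Type := Matrix (Fin 2 × Fin 2 × Fin 2) (Fin 2 × Fin 2 × Fin 2) ℂ

/-- `tp a b c` is the elementary tensor `a ⊗ b ⊗ c` in `M₂ ⊗ M₂ ⊗ M₂`. -/
def tp (a b c : Matrix (Fin 2) (Fin 2) ℂ) : M3 := a ⊗ₖ (b ⊗ₖ c)

def K₀ (β : ℝ) : ℝ := (Real.exp β + 1) / 2
def K₃ (β : ℝ) : ℝ := (Real.exp β - 1) / 2
def R₀ (β J : ℝ) : ℝ := (Real.exp (J * β) + 1) / 2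
def R₃ (β J : ℝ) : ℝ := (Real.exp (J * β) - 1) / 2

/-- `K¹² = K₀•(1⊗1⊗1) + K₃•(σ⊗σ⊗1)`. -/
def K12 (β : ℝ) : M3 := ((K₀ β : ℝ) : ℂ) • tp 1 1 1 + ((K₃ β : ℝ) : ℂ) • tp σz σz 1

/-- `K¹³ = K₀•(1⊗1⊗1) + K₃•(σ⊗1⊗σ)`. -/
def K13 (β : ℝ) : M3 := ((K₀ β : ℝ) : ℂ) • tp 1 1 1 + ((K₃ β : ℝ) : ℂ) • tp σz 1 σz

/-- `L²³ = R₀•(1⊗1⊗1) + R₃•(1⊗σ⊗σ)`. -/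
def L23 (β J : ℝ) : M3 := ((R₀ β J : ℝ) : ℂ) • tp 1 1 1 + ((R₃ β J : ℝ) : ℂ) • tp 1 σz σz

/-- The transfer operator `A = K¹² K¹³ L²³` of the Ising model with competing interactions. -/
def A (β J : ℝ) : M3 := K12 β * K13 β * L23 β J

def d : Fin 2 → ℂ := ![1, -1]

lemma σz_eq : σz = Matrix.diagonal d := by
  ext i j
  fin_cases i <;> fin_cases j <;> simp [σz, d, Matrix.diagonal]

lemma A_eq (β J : ℝ) : A β J = Matrix.diagonal (fun p =>
    ((K₀ β : ℂ) + (K₃ β : ℂ) * (d p.1 * (d p.2.1 * 1))) *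
    ((K₀ β : ℂ) + (K₃ β : ℂ) * (d p.1 * (1 * d p.2.2))) *
    ((R₀ β J : ℂ) + (R₃ β J : ℂ) * (1 * (d p.2.1 * d p.2.2)))) := by
  have h1 : (1 : Matrix (Fin 2) (Fin 2) ℂ) = Matrix.diagonal (fun _ => 1) := Matrix.diagonal_one.symm
  rw [A, K12, K13, L23, tp, tp, tp, tp, σz_eq, h1]
  simp only [Matrix.diagonal_kronecker_diagonal, ← Matrix.diagonal_smul]
  rw [Matrix.diagonal_add, Matrix.diagonal_add, Matrix.diagonal_add,
    Matrix.diagonal_mul_diagonal, Matrix.diagonal_mul_diagonal]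
  ext p q
  simp only [Matrix.diagonal_apply, Pi.add_apply, Pi.smul_apply, Pi.mul_apply, smul_eq_mul]
  split_ifs with h
  · ring
  · rfl

/-- The matrix `A` is diagonal, with diagonal entry at spin configuration `(s₁,s₂,s₃)`
equal to `exp((β/2)(1+s₁s₂) + (β/2)(1+s₁s₃) + (Jβ/2)(1+s₂s₃))`, where `sᵢ = 1 - 2 uᵢ`. -/
theorem transfer_operator_diagonal (β J : ℝ) (hβ : 0 < β) (hJ : 0 < J)
    (u v : Fin 2 × Fin 2 × Fin 2) :
    (u ≠ v → A β J u v = 0) ∧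
      A β J u u =
        Complex.exp
          (((β / 2) * (1 + (1 - 2 * ((u.1 : ℕ) : ℝ)) * (1 - 2 * ((u.2.1 : ℕ) : ℝ))) +
              (β / 2) * (1 + (1 - 2 * ((u.1 : ℕ) : ℝ)) * (1 - 2 * ((u.2.2 : ℕ) : ℝ))) +
              ((J * β) / 2) * (1 + (1 - 2 * ((u.2.1 : ℕ) : ℝ)) * (1 - 2 * ((u.2.2 : ℕ) : ℝ))) :
            ℝ) : ℂ) := by
  constructor
  · intro huv
    rw [A_eq]
    exact Matrix.diagonal_apply_ne _ huv
  · rw [A_eq, Matrix.diagonal_apply_eq]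
    obtain ⟨u1, u2, u3⟩ := u
    fin_cases u1 <;> fin_cases u2 <;> fin_cases u3 <;>
      · simp only [d]
        norm_num [← Complex.ofReal_exp]
        norm_cast
        simp only [K₀, K₃, R₀, R₃, Real.exp_add]
        ring
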